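/- arXiv:2407.02938 — 2 statements merged into one kernel-verified Lean document; each statement's English description precedes it below -/
import Mathlib

section
/- Let n = p_1^{m} p_2 where p_1 and p_2 are distinct primes and m ≥ 2. Then the metric dimension of the essential ideal graph E_{Z_n} of Z_n = Z/nZ equals 2m − 2. -/
/-- An ideal `I` of a commutative ring `R` is essential if it is nonzero and has
nonzero intersection with every nonzero ideal of `R`. -/
def IsEssentialIdeal {R : Type*} [CommRing R] (I : Ideal R) : Prop :=
  I ≠ ⊥ ∧ ∀ J : Ideal R, J ≠ ⊥ → I ⊓ J ≠ ⊥

/-- The essential ideal graph of a commutative ring `R`: vertices are the nonzero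
proper ideals of `R`, and distinct vertices `I`, `J` are adjacent iff `I + J` is
an essential ideal of `R`. -/
def essentialIdealGraph (R : Type*) [CommRing R] :
    SimpleGraph {I : Ideal R // I ≠ ⊥ ∧ I ≠ ⊤} where
  Adj I J := I ≠ J ∧ IsEssentialIdeal (I.1 ⊔ J.1)
  symm := ⟨by
    rintro I J ⟨hne, h⟩
    exact ⟨hne.symm, by rwa [sup_comm]⟩⟩
  loopless := ⟨fun I h => h.1 rfl⟩

/-- The annihilating ideal graph of a commutative ring `R`: vertices are the nonzero
annihilating ideals of `R`, with distinct vertices `I`, `J` adjacent iff `I * J = 0`. -/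
def annihilatingIdealGraph (R : Type*) [CommRing R] :
    SimpleGraph {I : Ideal R // I ≠ ⊥ ∧ ∃ J : Ideal R, J ≠ ⊥ ∧ I * J = ⊥} where
  Adj I J := I ≠ J ∧ I.1 * J.1 = ⊥
  symm := ⟨by
    rintro I J ⟨hne, h⟩
    exact ⟨hne.symm, by rwa [mul_comm]⟩⟩
  loopless := ⟨fun I h => h.1 rfl⟩

/-- A set `W` of vertices of a graph `G` is a resolving set if any two distinct
vertices are distinguished by their distance to some element of `W`. -/
def IsResolvingSet {V : Type*} (G : SimpleGraph V) (W : Set V) : Prop :=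
  ∀ u v : V, u ≠ v → ∃ w ∈ W, G.dist u w ≠ G.dist v w

/-- The metric dimension of a graph: the least cardinality of a (finite) resolving set. -/
noncomputable def metricDim {V : Type*} (G : SimpleGraph V) : ℕ :=
  sInf {k : ℕ | ∃ W : Set V, W.Finite ∧ IsResolvingSet G W ∧ W.ncard = k}

/-- The degree of a vertex: the number of vertices adjacent to it. -/
noncomputable def gdeg {V : Type*} (G : SimpleGraph V) (v : V) : ℕ :=
  Nat.card {u : V // G.Adj v u}

/-- The first Zagreb index: the sum of the squares of the vertex degrees. -/
noncomputable def zagreb1 {V : Type*} (G : SimpleGraph V) : ℕ :=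
  ∑ᶠ v : V, (gdeg G v) ^ 2

/-- The second Zagreb index: the sum over edges `{u,v}` of `deg u * deg v`. -/
noncomputable def zagreb2 {V : Type*} (G : SimpleGraph V) : ℕ :=
  ∑ᶠ e ∈ G.edgeSet, Sym2.lift ⟨fun u v => gdeg G u * gdeg G v, fun u v => mul_comm _ _⟩ e


open Ideal

section ZModIdeals
variable {n : ℕ}

lemma aux_span_eq_bot (d : ℕ) :
    Ideal.span {(d : ZMod n)} = ⊥ ↔ n ∣ d := by
  rw [Ideal.span_singleton_eq_bot, ZMod.natCast_eq_zero_iff]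

lemma aux_span_eq_top [NeZero n] (d : ℕ) :
    Ideal.span {(d : ZMod n)} = ⊤ ↔ Nat.Coprime d n := by
  rw [Ideal.span_singleton_eq_top, ZMod.isUnit_iff_coprime]

lemma aux_span_le_span {d e : ℕ} (he : e ∣ n) :
    Ideal.span {(d : ZMod n)} ≤ Ideal.span {(e : ZMod n)} ↔ e ∣ d := by
  constructor
  · intro h
    have hd : (d : ZMod n) ∈ Ideal.span {(e : ZMod n)} :=
      h (Ideal.subset_span rfl)
    rw [Ideal.mem_span_singleton] at hd
    obtain ⟨c, hc⟩ := hd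
    obtain ⟨z, rfl⟩ := ZMod.intCast_surjective c
    have h0 : (((d : ℤ) - e * z : ℤ) : ZMod n) = 0 := by
      push_cast
      rw [← hc]; ring
    rw [ZMod.intCast_zmod_eq_zero_iff_dvd] at h0
    have hen : (e : ℤ) ∣ (n : ℤ) := Int.natCast_dvd_natCast.mpr he
    have : (e : ℤ) ∣ (d : ℤ) := by
      have h1 : (e : ℤ) ∣ (d : ℤ) - e * z := hen.trans h0
      have h2 : (e : ℤ) ∣ (e : ℤ) * z := Dvd.intro _ rfl
      simpa using dvd_add h1 h2
    exact_mod_cast this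
  · intro ⟨c, hc⟩
    rw [Ideal.span_singleton_le_span_singleton]
    exact ⟨(c : ZMod n), by rw [hc]; push_cast; ring⟩

lemma aux_span_inj {d e : ℕ} (hd : d ∣ n) (he : e ∣ n)
    (h : Ideal.span {(d : ZMod n)} = Ideal.span {(e : ZMod n)}) : d = e :=
  Nat.dvd_antisymm ((aux_span_le_span hd).mp h.ge) ((aux_span_le_span he).mp h.le)

lemma aux_ideal_eq_span [NeZero n] (I : Ideal (ZMod n)) :
    ∃ d : ℕ, d ∣ n ∧ I = Ideal.span {(d : ZMod n)} := by
  set π := Int.castRingHom (ZMod n) with hπ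
  have hsurj : Function.Surjective π := ZMod.intCast_surjective
  obtain ⟨g, hg0⟩ := (IsPrincipalIdealRing.principal (I.comap π)).principal
  have hg : I.comap π = Ideal.span {g} := hg0
  have hImap : I = (I.comap π).map π := (Ideal.map_comap_of_surjective π hsurj I).symm
  have hspan : I = Ideal.span {((g : ℤ) : ZMod n)} := by
    rw [hImap, hg]
    rw [Ideal.map_span, Set.image_singleton]
    rfl
  refine ⟨g.natAbs, ?_, ?_⟩
  · have hn : (n : ℤ) ∈ I.comap π := by
      simp only [Ideal.mem_comap, hπ]
      simp only [map_natCast, ZMod.natCast_self]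
      exact I.zero_mem
    rw [hg, Ideal.mem_span_singleton] at hn
    have := Int.natAbs_dvd_natAbs.mpr hn
    simpa using this
  · rw [hspan]
    rcases Int.natAbs_eq g with h | h
    · have : ((g : ℤ) : ZMod n) = ((g.natAbs : ℕ) : ZMod n) := by
        rw [← Int.cast_natCast, ← h]
      rw [this]
    · have : ((g : ℤ) : ZMod n) = -((g.natAbs : ℕ) : ZMod n) := by
        rw [← Int.cast_natCast, ← Int.cast_neg, ← h]
      rw [this, Ideal.span_singleton_neg]

lemma aux_span_sup (d e : ℕ) :
    Ideal.span {(d : ZMod n)} ⊔ Ideal.span {(e : ZMod n)}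
      = Ideal.span {((Nat.gcd d e : ℕ) : ZMod n)} := by
  apply le_antisymm
  · apply sup_le <;> rw [Ideal.span_singleton_le_span_singleton]
    · exact Nat.cast_dvd_cast (Nat.gcd_dvd_left d e)
    · exact Nat.cast_dvd_cast (Nat.gcd_dvd_right d e)
  · rw [Ideal.span_singleton_le_iff_mem]
    have hbez := congrArg (fun z : ℤ => ((z : ℤ) : ZMod n)) (Nat.gcd_eq_gcd_ab d e)
    push_cast at hbez
    rw [hbez]
    exact Submodule.add_mem _
      (Ideal.mul_mem_right _ _ (Ideal.mem_sup_left (Ideal.subset_span rfl)))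
      (Ideal.mul_mem_right _ _ (Ideal.mem_sup_right (Ideal.subset_span rfl)))

lemma aux_span_inf {d e : ℕ} (hd : d ∣ n) (he : e ∣ n) :
    Ideal.span {(d : ZMod n)} ⊓ Ideal.span {(e : ZMod n)}
      = Ideal.span {((Nat.lcm d e : ℕ) : ZMod n)} := by
  apply le_antisymm
  · intro x hx
    rw [Submodule.mem_inf] at hx
    obtain ⟨hx1, hx2⟩ := hx
    rw [Ideal.mem_span_singleton] at hx1 hx2
    obtain ⟨u, hu⟩ := hx1
    obtain ⟨v, hv⟩ := hx2
    obtain ⟨z, rfl⟩ := ZMod.intCast_surjective u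
    obtain ⟨w, rfl⟩ := ZMod.intCast_surjective v
    have h0 : ((d * z - e * w : ℤ) : ZMod n) = 0 := by
      push_cast
      rw [← hu, ← hv]; ring
    rw [ZMod.intCast_zmod_eq_zero_iff_dvd] at h0
    have hdz : (e : ℤ) ∣ (d : ℤ) * z := by
      have h1 : (e : ℤ) ∣ (d * z - e * w : ℤ) :=
        (Int.natCast_dvd_natCast.mpr he).trans h0
      have h2 : (e : ℤ) ∣ (e : ℤ) * w := Dvd.intro _ rfl
      have := dvd_add h1 h2
      simpa using this
    have hlcm : ((Nat.lcm d e : ℕ) : ℤ) ∣ (d : ℤ) * z := by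
      have := Int.dvd_natAbs.mp (Int.natCast_dvd_natCast.mpr (Int.lcm_dvd (Int.dvd_natAbs.mpr (Dvd.intro z rfl : (d : ℤ) ∣ (d : ℤ) * z)) (Int.dvd_natAbs.mpr hdz)))
      simpa [Int.lcm] using this
    obtain ⟨t, ht⟩ := hlcm
    rw [Ideal.mem_span_singleton]
    refine ⟨((t : ℤ) : ZMod n), ?_⟩
    have : x = (((d : ℤ) * z : ℤ) : ZMod n) := by rw [hu]; push_cast; ring
    rw [this, ht]
    push_cast
    ring
  · apply le_inf <;> rw [Ideal.span_singleton_le_span_singleton]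
    · exact Nat.cast_dvd_cast (Nat.dvd_lcm_left d e)
    · exact Nat.cast_dvd_cast (Nat.dvd_lcm_right d e)

end ZModIdeals

section Arith
variable {p₁ p₂ : ℕ}

lemma aux_cop_pow (hp₁ : p₁.Prime) (hp₂ : p₂.Prime) (hne : p₁ ≠ p₂) (a b : ℕ) : Nat.Coprime (p₁ ^ a) (p₂ ^ b) :=
  ((Nat.coprime_primes hp₁ hp₂).mpr hne).pow a b

lemma aux_pow_dvd (hp₁ : p₁.Prime) (hp₂ : p₂.Prime) (hne : p₁ ≠ p₂) {k a b : ℕ} : p₁ ^ k ∣ p₁ ^ a * p₂ ^ b ↔ k ≤ a := by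
  constructor
  · intro h
    have h1 : p₁ ^ k ∣ p₁ ^ a :=
      (Nat.Coprime.dvd_of_dvd_mul_right (aux_cop_pow hp₁ hp₂ hne k b) h)
    exact (Nat.pow_dvd_pow_iff_le_right hp₁.one_lt).mp h1
  · intro h
    exact dvd_mul_of_dvd_left (pow_dvd_pow _ h) _

lemma aux_p2_dvd (hp₁ : p₁.Prime) (hp₂ : p₂.Prime) (hne : p₁ ≠ p₂) {a b : ℕ} : p₂ ∣ p₁ ^ a * p₂ ^ b ↔ 1 ≤ b := by
  constructor
  · intro h
    by_contra hb
    have hb0 : b = 0 := by omega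
    rw [hb0, pow_zero, mul_one] at h
    exact hne ((Nat.prime_dvd_prime_iff_eq hp₂ hp₁).mp (hp₂.dvd_of_dvd_pow h)).symm
  · intro h
    exact Dvd.dvd.mul_left (dvd_pow_self p₂ (by omega)) _

lemma aux_n_dvd (hp₁ : p₁.Prime) (hp₂ : p₂.Prime) (hne : p₁ ≠ p₂) {m a b : ℕ} (hb : b ≤ 1) :
    p₁ ^ m * p₂ ∣ p₁ ^ a * p₂ ^ b ↔ m ≤ a ∧ 1 ≤ b := by
  constructor
  · intro h
    constructor
    · exact (aux_pow_dvd hp₁ hp₂ hne).mp ((dvd_mul_right _ _).trans h)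
    · exact (aux_p2_dvd hp₁ hp₂ hne).mp ((dvd_mul_left _ _).trans h)
  · rintro ⟨h1, h2⟩
    have hb1 : b = 1 := by omega
    subst hb1
    rw [pow_one]
    exact Nat.mul_dvd_mul (pow_dvd_pow _ h1) dvd_rfl

lemma aux_D_inj (hp₁ : p₁.Prime) (hp₂ : p₂.Prime) (hne : p₁ ≠ p₂) {a b c f : ℕ} (hb : b ≤ 1) (hf : f ≤ 1)
    (h : p₁ ^ a * p₂ ^ b = p₁ ^ c * p₂ ^ f) : a = c ∧ b = f := by
  have hac : a = c := by
    have h1 : a ≤ c := (aux_pow_dvd hp₁ hp₂ hne).mp (h ▸ dvd_mul_right (p₁ ^ a) (p₂ ^ b))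
    have h2 : c ≤ a := (aux_pow_dvd hp₁ hp₂ hne).mp (h ▸ dvd_mul_right (p₁ ^ c) (p₂ ^ f))
    omega
  have hbf : (1 ≤ b) ↔ (1 ≤ f) := by
    rw [← aux_p2_dvd hp₁ hp₂ hne (a := a), ← aux_p2_dvd hp₁ hp₂ hne (a := c), h]
  exact ⟨hac, by omega⟩

lemma aux_dvd_classify (hp₁ : p₁.Prime) (hp₂ : p₂.Prime) {m d : ℕ} (hd : d ∣ p₁ ^ m * p₂) :
    ∃ a ≤ m, ∃ b ≤ 1, d = p₁ ^ a * p₂ ^ b := by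
  obtain ⟨d₁, d₂, h1, h2, rfl⟩ := exists_dvd_and_dvd_of_dvd_mul hd
  obtain ⟨a, ha, rfl⟩ := (Nat.dvd_prime_pow hp₁).mp h1
  rcases (Nat.Prime.eq_one_or_self_of_dvd hp₂ d₂ h2) with h | h
  · exact ⟨a, ha, 0, by omega, by rw [h, pow_zero]⟩
  · exact ⟨a, ha, 1, le_rfl, by rw [h, pow_one]⟩

end Arith

section Essential
variable {p₁ p₂ : ℕ}

lemma aux_essential_iff (hp₁ : p₁.Prime) (hp₂ : p₂.Prime) (hne : p₁ ≠ p₂) {m d : ℕ}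
    (hm : 1 ≤ m) (hd : d ∣ p₁ ^ m * p₂) :
    IsEssentialIdeal (Ideal.span {(d : ZMod (p₁ ^ m * p₂))}) ↔ ¬ p₂ ∣ d ∧ ¬ p₁ ^ m ∣ d := by
  haveI : NeZero (p₁ ^ m * p₂) := ⟨Nat.mul_ne_zero (pow_ne_zero m hp₁.ne_zero) hp₂.ne_zero⟩
  have hcop : Nat.Coprime (p₁ ^ m) p₂ := by
    simpa using ((Nat.coprime_primes hp₁ hp₂).mpr hne).pow m 1
  have hp1mn : (p₁ ^ m : ℕ) ∣ p₁ ^ m * p₂ := dvd_mul_right _ _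
  have hp2n : (p₂ : ℕ) ∣ p₁ ^ m * p₂ := dvd_mul_left _ _
  constructor
  · rintro ⟨h0, hJ⟩
    constructor
    · intro hp2d
      have hJbot : Ideal.span {((p₁ ^ m : ℕ) : ZMod (p₁ ^ m * p₂))} ≠ ⊥ := by
        simp only [ne_eq, aux_span_eq_bot]
        intro hdvd
        exact hne ((Nat.prime_dvd_prime_iff_eq hp₂ hp₁).mp
          (hp₂.dvd_of_dvd_pow (hp2n.trans hdvd))).symm
      have hJ' := hJ _ hJbot
      simp only [ne_eq, aux_span_inf hd hp1mn, aux_span_eq_bot] at hJ'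
      exact hJ' (Nat.Coprime.mul_dvd_of_dvd_of_dvd hcop (Nat.dvd_lcm_right _ _)
        (hp2d.trans (Nat.dvd_lcm_left _ _)))
    · intro hp1d
      have hJbot : Ideal.span {((p₂ : ℕ) : ZMod (p₁ ^ m * p₂))} ≠ ⊥ := by
        simp only [ne_eq, aux_span_eq_bot]
        intro hdvd
        have hdp : p₁ ∣ p₂ :=
          (dvd_mul_of_dvd_left (dvd_pow_self p₁ (by omega)) p₂).trans hdvd
        exact hne ((Nat.prime_dvd_prime_iff_eq hp₁ hp₂).mp hdp)
      have hJ' := hJ _ hJbot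
      simp only [ne_eq, aux_span_inf hd hp2n, aux_span_eq_bot] at hJ'
      exact hJ' (Nat.Coprime.mul_dvd_of_dvd_of_dvd hcop
        (hp1d.trans (Nat.dvd_lcm_left _ _)) (Nat.dvd_lcm_right _ _))
  · rintro ⟨h2, h1⟩
    constructor
    · simp only [ne_eq, aux_span_eq_bot]
      intro hdvd
      exact h2 (hp2n.trans hdvd)
    · intro J hJbot
      obtain ⟨e, he, rfl⟩ := aux_ideal_eq_span J
      simp only [ne_eq, aux_span_eq_bot] at hJbot
      simp only [ne_eq, aux_span_inf hd he, aux_span_eq_bot]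
      intro hn_lcm
      obtain ⟨a, ham, b, hb1, rfl⟩ := aux_dvd_classify hp₁ hp₂ hd
      obtain ⟨c, hcm, f, hf1, rfl⟩ := aux_dvd_classify hp₁ hp₂ he
      have hb0 : b = 0 := by
        by_contra hb0
        exact h2 ((aux_p2_dvd hp₁ hp₂ hne).mpr (by omega))
      have ham' : a < m := by
        by_contra ham'
        exact h1 ((aux_pow_dvd hp₁ hp₂ hne).mpr (by omega))
      subst hb0
      have hlcm_dvd : Nat.lcm (p₁ ^ a * p₂ ^ 0) (p₁ ^ c * p₂ ^ f) ∣ p₁ ^ (max a c) * p₂ ^ f :=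
        Nat.lcm_dvd
          (by rw [pow_zero, mul_one]
              exact dvd_mul_of_dvd_left (pow_dvd_pow _ (le_max_left a c)) _)
          (mul_dvd_mul (pow_dvd_pow _ (le_max_right a c)) dvd_rfl)
      have hnd := hn_lcm.trans hlcm_dvd
      rw [aux_n_dvd hp₁ hp₂ hne hf1] at hnd
      obtain ⟨hmax, hf⟩ := hnd
      have hm' : m ≤ a ∨ m ≤ c := le_max_iff.mp hmax
      apply hJbot
      rw [aux_n_dvd hp₁ hp₂ hne hf1]
      exact ⟨by omega, hf⟩

end Essential

lemma aux_metricDim {V : Type*} (G : SimpleGraph V) (A B : Set V) (m : ℕ) (hm : 2 ≤ m)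
    (hAfin : A.Finite) (hBfin : B.Finite) (hA : A.ncard = m) (hB : B.ncard = m)
    (hU : A ∪ B = Set.univ) (hD : Disjoint A B)
    (hadj : ∀ u v : V, G.Adj u v ↔ u ≠ v ∧ (u ∈ A ∨ v ∈ A)) :
    metricDim G = 2 * m - 2 := by
  have hAB : ∀ x : V, x ∈ A ∨ x ∈ B := by
    intro x
    have hx : x ∈ A ∪ B := by rw [hU]; trivial
    exact hx
  have hnotB : ∀ x ∈ A, x ∉ B := fun x hx => Set.disjoint_left.mp hD hx
  have hAne : A.Nonempty := by
    rw [← Set.ncard_pos hAfin, hA]; omega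
  obtain ⟨a₀, ha₀⟩ := hAne
  obtain ⟨b₀, b₁, hb₀, hb₁, hbne⟩ := (Set.one_lt_ncard_iff hBfin).mp (by rw [hB]; omega)
  have hdist1 : ∀ u v : V, u ≠ v → (u ∈ A ∨ v ∈ A) → G.dist u v = 1 :=
    fun u v h1 h2 => SimpleGraph.dist_eq_one_iff_adj.mpr ((hadj u v).mpr ⟨h1, h2⟩)
  have hdist2 : ∀ u v : V, u ≠ v → u ∈ B → v ∈ B → G.dist u v = 2 := by
    intro u v huv hu hv
    have hau : a₀ ≠ u := fun h => hnotB a₀ ha₀ (h ▸ hu)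
    have hav : a₀ ≠ v := fun h => hnotB a₀ ha₀ (h ▸ hv)
    have hle : G.dist u v ≤ 2 := by
      have := SimpleGraph.dist_le (SimpleGraph.Walk.cons ((hadj u a₀).mpr ⟨hau.symm, Or.inr ha₀⟩)
        (SimpleGraph.Walk.cons ((hadj a₀ v).mpr ⟨hav, Or.inl ha₀⟩) SimpleGraph.Walk.nil))
      simpa using this
    have h0 : G.dist u v ≠ 0 :=
      SimpleGraph.dist_ne_zero_iff_ne_and_reachable.mpr ⟨huv,
        (SimpleGraph.Walk.cons ((hadj u a₀).mpr ⟨hau.symm, Or.inr ha₀⟩)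
          (SimpleGraph.Walk.cons ((hadj a₀ v).mpr ⟨hav, Or.inl ha₀⟩)
            SimpleGraph.Walk.nil)).reachable⟩
    have h1 : G.dist u v ≠ 1 := by
      intro h
      rcases ((hadj u v).mp (SimpleGraph.dist_eq_one_iff_adj.mp h)).2 with h' | h'
      · exact hnotB u h' hu
      · exact hnotB v h' hv
    omega
  have hdist0 : ∀ u v : V, u ≠ v → G.dist u v ≠ 0 := by
    intro u v huv
    rcases hAB u with hu | hu
    · rw [hdist1 u v huv (Or.inl hu)]; omega
    · rcases hAB v with hv | hv
      · rw [hdist1 u v huv (Or.inr hv)]; omega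
      · rw [hdist2 u v huv hu hv]; omega
  set W : Set V := (A \ {a₀}) ∪ (B \ {b₀}) with hW
  have hWd : Disjoint (A \ {a₀}) (B \ {b₀}) := hD.mono Set.diff_subset Set.diff_subset
  have hWfin : W.Finite := hAfin.diff.union hBfin.diff
  have hWcard : W.ncard = 2 * m - 2 := by
    rw [hW, Set.ncard_union_eq hWd hAfin.diff hBfin.diff,
        Set.ncard_diff_singleton_of_mem ha₀, Set.ncard_diff_singleton_of_mem hb₀,
        hA, hB]
    omega
  have hWres : IsResolvingSet G W := by
    intro u v huv
    by_cases hu : u ∈ W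
    · exact ⟨u, hu, by
        rw [SimpleGraph.dist_self]
        exact fun h => hdist0 v u huv.symm h.symm⟩
    by_cases hv : v ∈ W
    · exact ⟨v, hv, by
        rw [SimpleGraph.dist_self]
        exact hdist0 u v huv⟩
    have hchar : ∀ x : V, x ∉ W → x = a₀ ∨ x = b₀ := by
      intro x hx
      rcases hAB x with h | h
      · left; by_contra hxa; exact hx (Or.inl ⟨h, by simpa using hxa⟩)
      · right; by_contra hxb; exact hx (Or.inr ⟨h, by simpa using hxb⟩)
    have hb₁W : b₁ ∈ W := Or.inr ⟨hb₁, by simpa using hbne.symm⟩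
    have hab : a₀ ≠ b₁ := fun h => hnotB a₀ ha₀ (h ▸ hb₁)
    have key : G.dist a₀ b₁ ≠ G.dist b₀ b₁ := by
      rw [hdist1 a₀ b₁ hab (Or.inl ha₀), hdist2 b₀ b₁ hbne hb₀ hb₁]
      omega
    rcases hchar u hu with rfl | rfl
    · rcases hchar v hv with rfl | rfl
      · exact absurd rfl huv
      · exact ⟨b₁, hb₁W, key⟩
    · rcases hchar v hv with rfl | rfl
      · exact ⟨b₁, hb₁W, fun h => key h.symm⟩
      · exact absurd rfl huv
  have hmem : 2 * m - 2 ∈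
      {k : ℕ | ∃ W : Set V, W.Finite ∧ IsResolvingSet G W ∧ W.ncard = k} :=
    ⟨W, hWfin, hWres, hWcard⟩
  have hlow : ∀ k ∈ {k : ℕ | ∃ W : Set V, W.Finite ∧ IsResolvingSet G W ∧ W.ncard = k},
      2 * m - 2 ≤ k := by
    rintro k ⟨S, hSfin, hSres, rfl⟩
    have hA1 : (A \ S).ncard ≤ 1 := by
      by_contra h
      obtain ⟨x, y, hx, hy, hxy⟩ := (Set.one_lt_ncard_iff (hAfin.diff (t := S))).mp (by omega)
      obtain ⟨w, hwS, hwd⟩ := hSres x y hxy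
      apply hwd
      have hwx : x ≠ w := fun h => hx.2 (h ▸ hwS)
      have hwy : y ≠ w := fun h => hy.2 (h ▸ hwS)
      rw [hdist1 x w hwx (Or.inl hx.1), hdist1 y w hwy (Or.inl hy.1)]
    have hB1 : (B \ S).ncard ≤ 1 := by
      by_contra h
      obtain ⟨x, y, hx, hy, hxy⟩ := (Set.one_lt_ncard_iff (hBfin.diff (t := S))).mp (by omega)
      obtain ⟨w, hwS, hwd⟩ := hSres x y hxy
      apply hwd
      have hwx : x ≠ w := fun h => hx.2 (h ▸ hwS)
      have hwy : y ≠ w := fun h => hy.2 (h ▸ hwS)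
      rcases hAB w with hw | hw
      · rw [hdist1 x w hwx (Or.inr hw), hdist1 y w hwy (Or.inr hw)]
      · rw [hdist2 x w hwx hx.1 hw, hdist2 y w hwy hy.1 hw]
    have hAS := Set.ncard_inter_add_ncard_diff_eq_ncard A S hAfin
    have hBS := Set.ncard_inter_add_ncard_diff_eq_ncard B S hBfin
    have hsub : (A ∩ S) ∪ (B ∩ S) ⊆ S := by
      rintro x (⟨_, h⟩ | ⟨_, h⟩) <;> exact h
    have hle : (A ∩ S).ncard + (B ∩ S).ncard ≤ S.ncard := by
      rw [← Set.ncard_union_eq (hD.mono Set.inter_subset_left Set.inter_subset_left)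
        (hAfin.inter_of_left _) (hBfin.inter_of_left _)]
      exact Set.ncard_le_ncard hsub hSfin
    omega
  exact le_antisymm (Nat.sInf_le hmem) (le_csInf ⟨_, hmem⟩ hlow)

/-- For `n = p₁^m p₂` with `p₁ ≠ p₂` primes and `m ≥ 2`, the metric
dimension of the essential ideal graph of `ℤ/nℤ` equals `2m - 2`. -/
theorem stmt_13 (p₁ p₂ : ℕ) (hp₁ : p₁.Prime) (hp₂ : p₂.Prime) (hne : p₁ ≠ p₂)
    (m : ℕ) (hm : 2 ≤ m) (n : ℕ) (hn : n = p₁ ^ m * p₂) :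
    metricDim (essentialIdealGraph (ZMod n)) = 2 * m - 2 := by
  subst hn
  haveI : NeZero (p₁ ^ m * p₂) :=
    ⟨Nat.mul_ne_zero (pow_ne_zero m hp₁.ne_zero) hp₂.ne_zero⟩
  classical
  -- basic divisibility facts
  have hdvd_pow : ∀ a, a ≤ m → (p₁ ^ a : ℕ) ∣ p₁ ^ m * p₂ :=
    fun a ha => dvd_mul_of_dvd_left (pow_dvd_pow _ ha) _
  have hdvd_mix : ∀ a, a ≤ m → (p₁ ^ a * p₂ : ℕ) ∣ p₁ ^ m * p₂ :=
    fun a ha => mul_dvd_mul (pow_dvd_pow _ ha) dvd_rfl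
  have hp2p1 : ∀ a : ℕ, ¬ p₂ ∣ p₁ ^ a := by
    intro a h
    exact hne ((Nat.prime_dvd_prime_iff_eq hp₂ hp₁).mp (hp₂.dvd_of_dvd_pow h)).symm
  have hbotA : ∀ a : ℕ, ¬ (p₁ ^ m * p₂ ∣ p₁ ^ a) := by
    intro a hdvd
    exact hp2p1 a ((dvd_mul_left _ _).trans hdvd)
  have hbotB : ∀ a, a < m → ¬ (p₁ ^ m * p₂ ∣ p₁ ^ a * p₂) := by
    intro a ha hdvd
    have h1 : p₁ ^ m ∣ p₁ ^ a * p₂ ^ 1 := by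
      rw [pow_one]; exact (dvd_mul_right _ _).trans hdvd
    have := (aux_pow_dvd hp₁ hp₂ hne).mp h1
    omega
  have htopA : ∀ a, 1 ≤ a → ¬ Nat.Coprime (p₁ ^ a) (p₁ ^ m * p₂) := by
    intro a ha hcp
    exact Nat.Prime.not_coprime_iff_dvd.mpr
      ⟨p₁, hp₁, dvd_pow_self _ (by omega),
        dvd_mul_of_dvd_left (dvd_pow_self _ (by omega)) _⟩ hcp
  have htopB : ∀ a : ℕ, ¬ Nat.Coprime (p₁ ^ a * p₂) (p₁ ^ m * p₂) := fun a hcp =>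
    Nat.Prime.not_coprime_iff_dvd.mpr ⟨p₂, hp₂, dvd_mul_left _ _, dvd_mul_left _ _⟩ hcp
  -- the two vertex families
  set A : Set {I : Ideal (ZMod (p₁ ^ m * p₂)) // I ≠ ⊥ ∧ I ≠ ⊤} :=
    {v | ∃ a, 1 ≤ a ∧ a ≤ m ∧ v.1 = Ideal.span {((p₁ ^ a : ℕ) : ZMod (p₁ ^ m * p₂))}} with hA
  set B : Set {I : Ideal (ZMod (p₁ ^ m * p₂)) // I ≠ ⊥ ∧ I ≠ ⊤} :=
    {v | ∃ a, a < m ∧ v.1 = Ideal.span {((p₁ ^ a * p₂ : ℕ) : ZMod (p₁ ^ m * p₂))}} with hB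
  have hAmem : ∀ a, 1 ≤ a → a ≤ m →
      (Ideal.span {((p₁ ^ a : ℕ) : ZMod (p₁ ^ m * p₂))} ≠ ⊥ ∧ Ideal.span {((p₁ ^ a : ℕ) : ZMod (p₁ ^ m * p₂))} ≠ ⊤) := by
    intro a h1 h2
    constructor
    · simp only [ne_eq, aux_span_eq_bot]; exact hbotA a
    · simp only [ne_eq, aux_span_eq_top]; exact htopA a h1
  have hBmem : ∀ a, a < m →
      (Ideal.span {((p₁ ^ a * p₂ : ℕ) : ZMod (p₁ ^ m * p₂))} ≠ ⊥ ∧ Ideal.span {((p₁ ^ a * p₂ : ℕ) : ZMod (p₁ ^ m * p₂))} ≠ ⊤) := by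
    intro a h1
    constructor
    · simp only [ne_eq, aux_span_eq_bot]; exact hbotB a h1
    · simp only [ne_eq, aux_span_eq_top]; exact htopB a
  -- enumerations
  have hm1 : 1 ≤ m := by omega
  set fA : Fin m → {I : Ideal (ZMod (p₁ ^ m * p₂)) // I ≠ ⊥ ∧ I ≠ ⊤} :=
    fun i => ⟨Ideal.span {((p₁ ^ ((i : ℕ) + 1) : ℕ) : ZMod (p₁ ^ m * p₂))},
      hAmem _ (by omega) (by omega : (i : ℕ) + 1 ≤ m)⟩ with hfA
  set fB : Fin m → {I : Ideal (ZMod (p₁ ^ m * p₂)) // I ≠ ⊥ ∧ I ≠ ⊤} :=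
    fun i => ⟨Ideal.span {((p₁ ^ (i : ℕ) * p₂ : ℕ) : ZMod (p₁ ^ m * p₂))}, hBmem _ i.2⟩ with hfB
  have hfAinj : Function.Injective fA := by
    intro i j hij
    have h1 : Ideal.span {((p₁ ^ ((i : ℕ) + 1) : ℕ) : ZMod (p₁ ^ m * p₂))}
        = Ideal.span {((p₁ ^ ((j : ℕ) + 1) : ℕ) : ZMod (p₁ ^ m * p₂))} := congrArg Subtype.val hij
    have h2 := aux_span_inj (hdvd_pow _ (by omega : (i : ℕ) + 1 ≤ m))
      (hdvd_pow _ (by omega : (j : ℕ) + 1 ≤ m)) h1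
    have h3 : (i : ℕ) + 1 ≤ (j : ℕ) + 1 :=
      (Nat.pow_dvd_pow_iff_le_right hp₁.one_lt).mp (h2 ▸ dvd_rfl)
    have h4 : (j : ℕ) + 1 ≤ (i : ℕ) + 1 :=
      (Nat.pow_dvd_pow_iff_le_right hp₁.one_lt).mp (h2 ▸ dvd_rfl)
    exact Fin.ext (by omega)
  have hfBinj : Function.Injective fB := by
    intro i j hij
    have h1 : Ideal.span {((p₁ ^ (i : ℕ) * p₂ : ℕ) : ZMod (p₁ ^ m * p₂))}
        = Ideal.span {((p₁ ^ (j : ℕ) * p₂ : ℕ) : ZMod (p₁ ^ m * p₂))} := congrArg Subtype.val hij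
    have h2 := aux_span_inj (hdvd_mix _ (le_of_lt i.2)) (hdvd_mix _ (le_of_lt j.2)) h1
    have h3 : p₁ ^ (i : ℕ) * p₂ ^ 1 = p₁ ^ (j : ℕ) * p₂ ^ 1 := by
      simpa [pow_one] using h2
    exact Fin.ext (aux_D_inj hp₁ hp₂ hne le_rfl le_rfl h3).1
  have hAeq : A = Set.range fA := by
    ext v
    constructor
    · rintro ⟨a, h1, h2, hv⟩
      refine ⟨⟨a - 1, by omega⟩, ?_⟩
      apply Subtype.ext
      simp only [hfA]
      have hfix : a - 1 + 1 = a := by omega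
      rw [hv, hfix]
    · rintro ⟨i, rfl⟩
      exact ⟨(i : ℕ) + 1, by omega, by omega, rfl⟩
  have hBeq : B = Set.range fB := by
    ext v
    constructor
    · rintro ⟨a, h1, hv⟩
      exact ⟨⟨a, h1⟩, Subtype.ext (by simp only [hfB]; rw [hv])⟩
    · rintro ⟨i, rfl⟩
      exact ⟨(i : ℕ), i.2, rfl⟩
  have hAfin : A.Finite := hAeq ▸ Set.finite_range fA
  have hBfin : B.Finite := hBeq ▸ Set.finite_range fB
  have hAcard : A.ncard = m := by
    rw [hAeq, ← Set.image_univ, Set.ncard_image_of_injective _ hfAinj, Set.ncard_univ]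
    simp
  have hBcard : B.ncard = m := by
    rw [hBeq, ← Set.image_univ, Set.ncard_image_of_injective _ hfBinj, Set.ncard_univ]
    simp
  have hU : A ∪ B = Set.univ := by
    apply Set.eq_univ_of_forall
    intro v
    obtain ⟨d, hd, hv⟩ := aux_ideal_eq_span v.1
    obtain ⟨a, ham, b, hb1, rfl⟩ := aux_dvd_classify hp₁ hp₂ hd
    have hvbot := v.2.1
    have hvtop := v.2.2
    interval_cases b
    · rw [pow_zero, mul_one] at hv hd
      have ha1 : 1 ≤ a := by
        by_contra h
        have ha0 : a = 0 := by omega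
        rw [ha0, pow_zero] at hv
        apply hvtop
        rw [hv, aux_span_eq_top]
        exact Nat.coprime_one_left _
      exact Or.inl ⟨a, ha1, ham, hv⟩
    · rw [pow_one] at hv hd
      have ham' : a < m := by
        by_contra h
        have ha : a = m := by omega
        apply hvbot
        rw [hv, aux_span_eq_bot, ha]
      exact Or.inr ⟨a, ham', hv⟩
  have hD : Disjoint A B := by
    rw [Set.disjoint_left]
    rintro v ⟨a, ha1, ham, hva⟩ ⟨c, hcm, hvc⟩
    have heq := aux_span_inj (hdvd_pow a ham) (hdvd_mix c (le_of_lt hcm))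
      (hva.symm.trans hvc)
    exact hp2p1 a (heq ▸ dvd_mul_left _ _)
  -- adjacency characterization
  have hadj_of_A : ∀ u v : {I : Ideal (ZMod (p₁ ^ m * p₂)) // I ≠ ⊥ ∧ I ≠ ⊤}, u ≠ v → u ∈ A →
      (essentialIdealGraph (ZMod (p₁ ^ m * p₂))).Adj u v := by
    intro u v huv hu
    obtain ⟨a, ha1, ham, hu'⟩ := hu
    refine (show u ≠ v ∧ _ from ⟨huv, ?_⟩)
    have hvU : v ∈ A ∪ B := by rw [hU]; trivial
    rcases hvU with ⟨c, hc1, hcm, hv'⟩ | ⟨c, hcm, hv'⟩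
    · rw [hu', hv', aux_span_sup,
        aux_essential_iff hp₁ hp₂ hne hm1 ((Nat.gcd_dvd_left _ _).trans (hdvd_pow a ham))]
      constructor
      · intro hp2g
        exact hp2p1 a (hp2g.trans (Nat.gcd_dvd_left _ _))
      · intro hpmg
        have h1 : m ≤ a := (Nat.pow_dvd_pow_iff_le_right hp₁.one_lt).mp
          (hpmg.trans (Nat.gcd_dvd_left _ _))
        have h2 : m ≤ c := (Nat.pow_dvd_pow_iff_le_right hp₁.one_lt).mp
          (hpmg.trans (Nat.gcd_dvd_right _ _))
        apply huv
        apply Subtype.ext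
        rw [hu', hv']
        have : a = c := by omega
        rw [this]
    · rw [hu', hv', aux_span_sup,
        aux_essential_iff hp₁ hp₂ hne hm1 ((Nat.gcd_dvd_left _ _).trans (hdvd_pow a ham))]
      constructor
      · intro hp2g
        exact hp2p1 a (hp2g.trans (Nat.gcd_dvd_left _ _))
      · intro hpmg
        have h2 : p₁ ^ m ∣ p₁ ^ c * p₂ ^ 1 := by
          rw [pow_one]; exact hpmg.trans (Nat.gcd_dvd_right _ _)
        have := (aux_pow_dvd hp₁ hp₂ hne).mp h2
        omega
  have hadj : ∀ u v : {I : Ideal (ZMod (p₁ ^ m * p₂)) // I ≠ ⊥ ∧ I ≠ ⊤},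
      (essentialIdealGraph (ZMod (p₁ ^ m * p₂))).Adj u v ↔ u ≠ v ∧ (u ∈ A ∨ v ∈ A) := by
    intro u v
    constructor
    · rintro (⟨huv, hess⟩ : u ≠ v ∧ IsEssentialIdeal (u.1 ⊔ v.1))
      refine ⟨huv, ?_⟩
      by_contra hAB'
      push_neg at hAB'
      obtain ⟨hua, hva⟩ := hAB'
      have huU : u ∈ A ∪ B := by rw [hU]; trivial
      have hvU : v ∈ A ∪ B := by rw [hU]; trivial
      rcases huU with h | ⟨a, ham, hu'⟩
      · exact hua h
      rcases hvU with h | ⟨c, hcm, hv'⟩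
      · exact hva h
      rw [hu', hv', aux_span_sup,
        aux_essential_iff hp₁ hp₂ hne hm1
          ((Nat.gcd_dvd_left _ _).trans (hdvd_mix a (le_of_lt ham)))] at hess
      exact hess.1 (Nat.dvd_gcd (dvd_mul_left _ _) (dvd_mul_left _ _))
    · rintro ⟨huv, h | h⟩
      · exact hadj_of_A u v huv h
      · exact (hadj_of_A v u huv.symm h).symm
  exact aux_metricDim _ A B m hm hAfin hBfin hAcard hBcard hU hD hadj
end

section
/- Let n = p_1^{m_1} p_2^{m_2} where p_1 < p_2 are primes and m_i > 1 for at least one i, and set m = m_1 m_2 − 1 and T = (m_1 + 1)(m_2 + 1) − 2 (the number of nonzero proper ideals of Z_n = Z/nZ). Then the first Zagreb index of the essential ideal graph E_{Z_n} equals m(T − 1)^2 + m_1(m + m_2)^2 + m_2(m + m_1)^2. -/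
def Sfin (m₁ m₂ : ℕ) : Finset (ℕ × ℕ) :=
  ((Finset.range (m₁+1) ×ˢ Finset.range (m₂+1)).erase (0,0)).erase (m₁,m₂)

lemma mem_Sfin {m₁ m₂ : ℕ} {x : ℕ × ℕ} :
    x ∈ Sfin m₁ m₂ ↔ x.1 ≤ m₁ ∧ x.2 ≤ m₂ ∧ x ≠ (0,0) ∧ x ≠ (m₁,m₂) := by
  simp only [Sfin, Finset.mem_erase, Finset.mem_product, Finset.mem_range, Nat.lt_succ_iff]
  tauto

lemma Sfin_card {m₁ m₂ : ℕ} (hm₁ : 1 ≤ m₁) (hm₂ : 1 ≤ m₂) :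
    (Sfin m₁ m₂).card = (m₁+1) * (m₂+1) - 2 := by
  rw [Sfin]
  rw [Finset.card_erase_of_mem, Finset.card_erase_of_mem, Finset.card_product,
    Finset.card_range, Finset.card_range]
  · omega
  · simp
  · simp only [Finset.mem_erase, Finset.mem_product, Finset.mem_range]
    refine ⟨?_, by omega, by omega⟩
    simp only [Ne, Prod.mk.injEq]
    omega

lemma Sfin_filter1 {m₁ m₂ : ℕ} (hm₁ : 1 ≤ m₁) :
    (Sfin m₁ m₂).filter (fun y => y.1 = m₁) = {m₁} ×ˢ Finset.range m₂ := by
  ext ⟨a, b⟩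
  simp only [Finset.mem_filter, mem_Sfin, Finset.mem_product, Finset.mem_singleton,
    Finset.mem_range, Ne, Prod.mk.injEq, not_and]
  constructor
  · rintro ⟨⟨h1, h2, h3, h4⟩, h5⟩
    exact ⟨h5, by omega⟩
  · rintro ⟨h5, hb⟩
    refine ⟨⟨by omega, by omega, by omega, by omega⟩, h5⟩

lemma Sfin_filter2 {m₁ m₂ : ℕ} (hm₂ : 1 ≤ m₂) :
    (Sfin m₁ m₂).filter (fun y => y.2 = m₂) = Finset.range m₁ ×ˢ {m₂} := by
  ext ⟨a, b⟩
  simp only [Finset.mem_filter, mem_Sfin, Finset.mem_product, Finset.mem_singleton,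
    Finset.mem_range, Ne, Prod.mk.injEq, not_and]
  constructor
  · rintro ⟨⟨h1, h2, h3, h4⟩, h5⟩
    exact ⟨by omega, h5⟩
  · rintro ⟨ha, h5⟩
    refine ⟨⟨by omega, by omega, by omega, by omega⟩, h5⟩

lemma Sfin_filter3 {m₁ m₂ : ℕ} (hm₁ : 1 ≤ m₁) (hm₂ : 1 ≤ m₂) :
    (Sfin m₁ m₂).filter (fun y => ¬ y.1 = m₁ ∧ ¬ y.2 = m₂) =
      (Finset.range m₁ ×ˢ Finset.range m₂).erase (0,0) := by
  ext ⟨a, b⟩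
  simp only [Finset.mem_filter, mem_Sfin, Finset.mem_erase, Finset.mem_product,
    Finset.mem_range, Ne, Prod.mk.injEq, not_and]
  constructor
  · rintro ⟨⟨h1, h2, h3, h4⟩, h5, h6⟩
    refine ⟨by omega, by omega, by omega⟩
  · rintro ⟨h0, ha, hb⟩
    refine ⟨⟨by omega, by omega, by omega, by omega⟩, by omega, by omega⟩
open Ideal

section
variable {n : ℕ} [NeZero n]

lemma cast_dvd_iff {e : ℕ} (he : e ∣ n) (a : ℕ) :
    (e : ZMod n) ∣ (a : ZMod n) ↔ e ∣ a := by
  constructor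
  · rintro ⟨c, hc⟩
    have h1 : ((e * c.val : ℕ) : ZMod n) = (a : ZMod n) := by
      push_cast
      rw [ZMod.natCast_val, ZMod.cast_id, ← hc]
    rw [eq_comm, ZMod.natCast_eq_natCast_iff] at h1
    have h2 : (n : ℤ) ∣ (e * c.val : ℕ) - (a : ℕ) := h1.dvd
    have h3 : (e : ℤ) ∣ (a : ℤ) := by
      have h5 : (e : ℤ) ∣ ((e * c.val : ℕ) : ℤ) - (a : ℤ) :=
        dvd_trans (Int.natCast_dvd_natCast.mpr he) h2
      have h4 : (e : ℤ) ∣ ((e * c.val : ℕ) : ℤ) := by push_cast; exact Dvd.intro _ rfl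
      simpa using dvd_sub h4 h5
    exact_mod_cast h3
  · exact fun h => Nat.cast_dvd_cast h

lemma zmod_principal (I : Ideal (ZMod n)) : ∃ d : ℕ, d ∣ n ∧ I = span {(d : ZMod n)} := by
  haveI : IsPrincipalIdealRing (ZMod n) :=
    IsPrincipalIdealRing.of_surjective (Int.castRingHom (ZMod n)) ZMod.intCast_surjective
  obtain ⟨x, hx⟩ := (IsPrincipalIdealRing.principal I).principal
  refine ⟨Nat.gcd x.val n, Nat.gcd_dvd_right _ _, ?_⟩
  rw [hx, Ideal.submodule_span_eq]
  apply le_antisymm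
  · rw [span_singleton_le_span_singleton]
    have : ((Nat.gcd x.val n : ℕ) : ZMod n) ∣ ((x.val : ℕ) : ZMod n) :=
      Nat.cast_dvd_cast (Nat.gcd_dvd_left _ _)
    simpa [ZMod.natCast_val, ZMod.cast_id] using this
  · rw [span_singleton_le_span_singleton]
    have hb := Nat.gcd_eq_gcd_ab x.val n
    refine ⟨(Nat.gcdA x.val n : ZMod n), ?_⟩
    have : ((Nat.gcd x.val n : ℤ) : ZMod n) = ((x.val * Nat.gcdA x.val n + n * Nat.gcdB x.val n : ℤ) : ZMod n) := by rw [← hb]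
    push_cast at this
    rw [ZMod.natCast_val, ZMod.cast_id, ZMod.natCast_self] at this
    simpa using this
end
open Ideal

section
variable {n : ℕ} [NeZero n]

lemma span_le_iff {d e : ℕ} (hd : d ∣ n) (he : e ∣ n) :
    span {(d : ZMod n)} ≤ span {(e : ZMod n)} ↔ e ∣ d := by
  rw [span_singleton_le_span_singleton, cast_dvd_iff he]

lemma span_inj {d e : ℕ} (hd : d ∣ n) (he : e ∣ n)
    (h : span {(d : ZMod n)} = span {(e : ZMod n)}) : d = e :=
  Nat.dvd_antisymm ((span_le_iff he hd).mp h.ge) ((span_le_iff hd he).mp h.le)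

lemma span_eq_bot_iff {d : ℕ} (hd : d ∣ n) : span {(d : ZMod n)} = ⊥ ↔ d = n := by
  rw [Ideal.span_singleton_eq_bot, ZMod.natCast_eq_zero_iff]
  exact ⟨fun h => Nat.dvd_antisymm hd h, fun h => h ▸ dvd_rfl⟩

lemma span_eq_top_iff {d : ℕ} (hd : d ∣ n) : span {(d : ZMod n)} = ⊤ ↔ d = 1 := by
  constructor
  · intro h
    have h1 : (1 : ZMod n) ∈ span {(d : ZMod n)} := h ▸ Submodule.mem_top
    rw [Ideal.mem_span_singleton] at h1
    have := (cast_dvd_iff hd 1).mp (by simpa using h1)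
    exact Nat.dvd_one.mp this
  · intro h
    subst h
    simp [Ideal.span_singleton_one]

lemma span_sup (d e : ℕ) :
    span {(d : ZMod n)} ⊔ span {(e : ZMod n)} = span {(Nat.gcd d e : ZMod n)} := by
  apply le_antisymm
  · apply sup_le <;> rw [span_singleton_le_span_singleton] <;>
      exact Nat.cast_dvd_cast (by first | exact Nat.gcd_dvd_left _ _ | exact Nat.gcd_dvd_right _ _)
  · rw [Ideal.span_le, Set.singleton_subset_iff]
    have hb := Nat.gcd_eq_gcd_ab d e
    have h2 : ((Nat.gcd d e : ℕ) : ZMod n) =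
        (d : ZMod n) * ((Nat.gcdA d e : ℤ) : ZMod n) + (e : ZMod n) * ((Nat.gcdB d e : ℤ) : ZMod n) := by
      have := congrArg (fun z : ℤ => ((z : ℤ) : ZMod n)) hb
      push_cast at this ⊢
      simpa using this
    rw [SetLike.mem_coe, h2]
    exact Ideal.add_mem _
      (Ideal.mem_sup_left (Ideal.mul_mem_right _ _ (Ideal.mem_span_singleton_self _)))
      (Ideal.mem_sup_right (Ideal.mul_mem_right _ _ (Ideal.mem_span_singleton_self _)))

lemma span_inf_eq_bot_iff {d e : ℕ} (hd : d ∣ n) (he : e ∣ n) :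
    span {(d : ZMod n)} ⊓ span {(e : ZMod n)} = ⊥ ↔ n ∣ Nat.lcm d e := by
  constructor
  · intro h
    have hmem : ((Nat.lcm d e : ℕ) : ZMod n) ∈ span {(d : ZMod n)} ⊓ span {(e : ZMod n)} := by
      rw [Submodule.mem_inf]
      exact ⟨Ideal.mem_span_singleton.mpr (Nat.cast_dvd_cast (Nat.dvd_lcm_left _ _)),
        Ideal.mem_span_singleton.mpr (Nat.cast_dvd_cast (Nat.dvd_lcm_right _ _))⟩
    rw [h] at hmem
    simpa [Ideal.mem_bot, ZMod.natCast_eq_zero_iff] using hmem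
  · intro h
    rw [eq_bot_iff]
    intro x hx
    rw [Submodule.mem_inf, Ideal.mem_span_singleton, Ideal.mem_span_singleton] at hx
    have hxv : ((x.val : ℕ) : ZMod n) = x := by rw [ZMod.natCast_val, ZMod.cast_id]
    have h1 : d ∣ x.val := (cast_dvd_iff hd x.val).mp (by rw [hxv]; exact hx.1)
    have h2 : e ∣ x.val := (cast_dvd_iff he x.val).mp (by rw [hxv]; exact hx.2)
    have h3 : n ∣ x.val := dvd_trans h (Nat.lcm_dvd h1 h2)
    have : ((x.val : ℕ) : ZMod n) = 0 := (ZMod.natCast_eq_zero_iff _ _).mpr h3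
    rw [hxv] at this
    simp [Ideal.mem_bot, this]
end

section
variable {p₁ p₂ : ℕ} (hp₁ : p₁.Prime) (hp₂ : p₂.Prime) (hne : p₁ ≠ p₂)

include hp₁ hp₂ hne in
lemma fact_pair (a b : ℕ) : (p₁ ^ a * p₂ ^ b).factorization p₁ = a ∧
    (p₁ ^ a * p₂ ^ b).factorization p₂ = b := by
  have h1 : p₁ ^ a ≠ 0 := pow_ne_zero _ hp₁.pos.ne'
  have h2 : p₂ ^ b ≠ 0 := pow_ne_zero _ hp₂.pos.ne'
  rw [Nat.factorization_mul h1 h2]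
  simp [Nat.factorization_pow, hp₁.factorization, hp₂.factorization,
    Finsupp.single_apply, Finsupp.add_apply, hne, hne.symm]

include hp₁ hp₂ hne in
lemma pair_inj {a b c f : ℕ} (h : p₁ ^ a * p₂ ^ b = p₁ ^ c * p₂ ^ f) : a = c ∧ b = f := by
  constructor
  · have := congrArg (fun x : ℕ => x.factorization p₁) h
    simpa [(fact_pair hp₁ hp₂ hne a b).1, (fact_pair hp₁ hp₂ hne c f).1] using this
  · have := congrArg (fun x : ℕ => x.factorization p₂) h
    simpa [(fact_pair hp₁ hp₂ hne a b).2, (fact_pair hp₁ hp₂ hne c f).2] using this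

include hp₁ hp₂ hne in
lemma pow_dvd_pair_iff₁ {a b k : ℕ} : p₁ ^ k ∣ p₁ ^ a * p₂ ^ b ↔ k ≤ a := by
  rw [hp₁.pow_dvd_iff_le_factorization
    (Nat.mul_ne_zero (pow_ne_zero _ hp₁.pos.ne') (pow_ne_zero _ hp₂.pos.ne')), (fact_pair hp₁ hp₂ hne a b).1]

include hp₁ hp₂ hne in
lemma pow_dvd_pair_iff₂ {a b k : ℕ} : p₂ ^ k ∣ p₁ ^ a * p₂ ^ b ↔ k ≤ b := by
  rw [hp₂.pow_dvd_iff_le_factorization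
    (Nat.mul_ne_zero (pow_ne_zero _ hp₁.pos.ne') (pow_ne_zero _ hp₂.pos.ne')), (fact_pair hp₁ hp₂ hne a b).2]

include hp₁ hp₂ in
lemma dvd_decomp {m₁ m₂ d : ℕ} (h : d ∣ p₁ ^ m₁ * p₂ ^ m₂) :
    ∃ a b, a ≤ m₁ ∧ b ≤ m₂ ∧ d = p₁ ^ a * p₂ ^ b := by
  obtain ⟨d₁, d₂, h₁, h₂, rfl⟩ := exists_dvd_and_dvd_of_dvd_mul h
  obtain ⟨a, ha, rfl⟩ := (Nat.dvd_prime_pow hp₁).mp h₁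
  obtain ⟨b, hb, rfl⟩ := (Nat.dvd_prime_pow hp₂).mp h₂
  exact ⟨a, b, ha, hb, rfl⟩

lemma pow_dvd_lcm_iff {p k d e : ℕ} (hp : p.Prime) (hd : d ≠ 0) (he : e ≠ 0) :
    p ^ k ∣ Nat.lcm d e ↔ p ^ k ∣ d ∨ p ^ k ∣ e := by
  rw [hp.pow_dvd_iff_le_factorization (Nat.lcm_ne_zero hd he),
    hp.pow_dvd_iff_le_factorization hd, hp.pow_dvd_iff_le_factorization he,
    Nat.factorization_lcm hd he, Finsupp.sup_apply, le_sup_iff]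

include hp₁ hp₂ hne in
lemma n_dvd_lcm_iff {m₁ m₂ d e : ℕ} (hd : d ≠ 0) (he : e ≠ 0) :
    p₁ ^ m₁ * p₂ ^ m₂ ∣ Nat.lcm d e ↔
      (p₁ ^ m₁ ∣ d ∨ p₁ ^ m₁ ∣ e) ∧ (p₂ ^ m₂ ∣ d ∨ p₂ ^ m₂ ∣ e) := by
  have hpp : Nat.Coprime (p₁ ^ m₁) (p₂ ^ m₂) :=
    Nat.Coprime.pow _ _ ((Nat.coprime_primes hp₁ hp₂).mpr hne)
  rw [← pow_dvd_lcm_iff hp₁ hd he, ← pow_dvd_lcm_iff hp₂ hd he]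
  constructor
  · exact fun h => ⟨dvd_trans (dvd_mul_right _ _) h, dvd_trans (dvd_mul_left _ _) h⟩
  · exact fun h => hpp.mul_dvd_of_dvd_of_dvd h.1 h.2
end

section
open Ideal
variable {p₁ p₂ m₁ m₂ : ℕ} (hp₁ : p₁.Prime) (hp₂ : p₂.Prime) (hne : p₁ ≠ p₂)
  (hm₁ : 1 ≤ m₁) (hm₂ : 1 ≤ m₂) {n : ℕ} (hn : n = p₁ ^ m₁ * p₂ ^ m₂) [NeZero n]

include hp₁ hp₂ hne hm₁ hm₂ hn in
lemma essential_iff {d : ℕ} (hd : d ∣ n) (hdn : d ≠ n) :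
    IsEssentialIdeal (span {(d : ZMod n)}) ↔ ¬ p₁ ^ m₁ ∣ d ∧ ¬ p₂ ^ m₂ ∣ d := by
  have hn0 : n ≠ 0 := NeZero.ne n
  have hd0 : d ≠ 0 := fun h => hn0 (by simpa [h] using hd)
  have hp1n : p₁ ^ m₁ ∣ n := hn ▸ dvd_mul_right _ _
  have hp2n : p₂ ^ m₂ ∣ n := hn ▸ dvd_mul_left _ _
  have hp1nen : p₁ ^ m₁ ≠ n := by
    intro h
    have h2 : p₂ ∣ n := hn ▸ dvd_mul_of_dvd_right (dvd_pow_self p₂ (by omega)) _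
    rw [← h] at h2
    exact hne ((Nat.prime_dvd_prime_iff_eq hp₂ hp₁).mp (hp₂.dvd_of_dvd_pow h2)).symm
  have hp2nen : p₂ ^ m₂ ≠ n := by
    intro h
    have h2 : p₁ ∣ n := hn ▸ dvd_mul_of_dvd_left (dvd_pow_self p₁ (by omega)) _
    rw [← h] at h2
    exact hne ((Nat.prime_dvd_prime_iff_eq hp₁ hp₂).mp (hp₁.dvd_of_dvd_pow h2))
  have hp10 : p₁ ^ m₁ ≠ 0 := pow_ne_zero _ hp₁.pos.ne'
  have hp20 : p₂ ^ m₂ ≠ 0 := pow_ne_zero _ hp₂.pos.ne'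
  constructor
  · rintro ⟨-, hall⟩
    constructor
    · intro hdvd
      refine hall (span {((p₂ ^ m₂ : ℕ) : ZMod n)}) ?_ ?_
      · rw [Ne, span_eq_bot_iff hp2n]
        exact hp2nen
      · rw [span_inf_eq_bot_iff hd hp2n, hn, n_dvd_lcm_iff hp₁ hp₂ hne hd0 hp20]
        exact ⟨Or.inl hdvd, Or.inr dvd_rfl⟩
    · intro hdvd
      refine hall (span {((p₁ ^ m₁ : ℕ) : ZMod n)}) ?_ ?_
      · rw [Ne, span_eq_bot_iff hp1n]
        exact hp1nen
      · rw [span_inf_eq_bot_iff hd hp1n, hn, n_dvd_lcm_iff hp₁ hp₂ hne hd0 hp10]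
        exact ⟨Or.inr dvd_rfl, Or.inl hdvd⟩
  · rintro ⟨h1, h2⟩
    constructor
    · rw [Ne, span_eq_bot_iff hd]
      exact hdn
    · intro J hJ hbot
      obtain ⟨e, he, rfl⟩ := zmod_principal J
      have hen : e ≠ n := fun h => hJ ((span_eq_bot_iff he).mpr h)
      have he0 : e ≠ 0 := fun h => hn0 (by simpa [h] using he)
      rw [span_inf_eq_bot_iff hd he, hn, n_dvd_lcm_iff hp₁ hp₂ hne hd0 he0] at hbot
      have he1 : p₁ ^ m₁ ∣ e := hbot.1.resolve_left h1
      have he2 : p₂ ^ m₂ ∣ e := hbot.2.resolve_left h2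
      have : n ∣ e := by
        rw [hn]
        exact (Nat.Coprime.pow _ _ ((Nat.coprime_primes hp₁ hp₂).mpr hne)).mul_dvd_of_dvd_of_dvd he1 he2
      exact hen (Nat.dvd_antisymm he this)
end


/-- For `n = p₁^{m₁} p₂^{m₂}` with `p₁ < p₂` primes and some `mᵢ > 1`,
setting `m = m₁m₂ - 1` and `T = (m₁+1)(m₂+1) - 2`, the first Zagreb index of the
essential ideal graph of `ℤ/nℤ` equals `m(T-1)² + m₁(m+m₂)² + m₂(m+m₁)²`. -/
theorem stmt_19 (p₁ p₂ : ℕ) (hp₁ : p₁.Prime) (hp₂ : p₂.Prime) (hlt : p₁ < p₂)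
    (m₁ m₂ : ℕ) (hm₁ : 1 ≤ m₁) (hm₂ : 1 ≤ m₂) (hsome : 1 < m₁ ∨ 1 < m₂)
    (n : ℕ) (hn : n = p₁ ^ m₁ * p₂ ^ m₂)
    (m T : ℕ) (hm : m = m₁ * m₂ - 1) (hT : T = (m₁ + 1) * (m₂ + 1) - 2) :
    zagreb1 (essentialIdealGraph (ZMod n)) =
      m * (T - 1) ^ 2 + m₁ * (m + m₂) ^ 2 + m₂ * (m + m₁) ^ 2 := by
  clear hsome
  have hne : p₁ ≠ p₂ := hlt.ne
  have hn0 : n ≠ 0 := by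
    rw [hn]
    exact Nat.mul_ne_zero (pow_ne_zero _ hp₁.pos.ne') (pow_ne_zero _ hp₂.pos.ne')
  haveI : NeZero n := ⟨hn0⟩
  -- arithmetic facts
  have hq : (m₁ + 1) * (m₂ + 1) = m₁ * m₂ + m₁ + m₂ + 1 := by ring
  have hq1 : 1 ≤ m₁ * m₂ := Nat.one_le_iff_ne_zero.mpr (Nat.mul_ne_zero (by omega) (by omega))
  -- divisor facts
  have hPdvd : ∀ a b : ℕ, a ≤ m₁ → b ≤ m₂ → p₁ ^ a * p₂ ^ b ∣ n := fun a b ha hb =>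
    hn ▸ mul_dvd_mul (pow_dvd_pow _ ha) (pow_dvd_pow _ hb)
  have hPn : ∀ a b : ℕ, p₁ ^ a * p₂ ^ b = n ↔ a = m₁ ∧ b = m₂ := by
    intro a b
    rw [hn]
    exact ⟨fun h => pair_inj hp₁ hp₂ hne h, fun h => by rw [h.1, h.2]⟩
  have hP1 : ∀ a b : ℕ, p₁ ^ a * p₂ ^ b = 1 ↔ a = 0 ∧ b = 0 := by
    intro a b
    constructor
    · intro h
      exact pair_inj hp₁ hp₂ hne (by simpa using h)
    · rintro ⟨rfl, rfl⟩; simp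
  -- the vertex map
  set S : Finset (ℕ × ℕ) := Sfin m₁ m₂ with hS
  let f : S → {I : Ideal (ZMod n) // I ≠ ⊥ ∧ I ≠ ⊤} := fun x =>
    ⟨Ideal.span {((p₁ ^ x.1.1 * p₂ ^ x.1.2 : ℕ) : ZMod n)}, by
      obtain ⟨h1, h2, h3, h4⟩ := mem_Sfin.mp x.2
      constructor
      · rw [Ne, span_eq_bot_iff (hPdvd _ _ h1 h2), hPn]
        intro h
        exact h4 (Prod.ext_iff.mpr h)
      · rw [Ne, span_eq_top_iff (hPdvd _ _ h1 h2), hP1]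
        intro h
        exact h3 (Prod.ext_iff.mpr h)⟩
  have hfval : ∀ x : S, (f x).1 = Ideal.span {((p₁ ^ x.1.1 * p₂ ^ x.1.2 : ℕ) : ZMod n)} :=
    fun x => rfl
  have hinj : Function.Injective f := by
    intro x y h
    have h2 := congrArg Subtype.val h
    rw [hfval, hfval] at h2
    have h3 := span_inj (hPdvd _ _ (mem_Sfin.mp x.2).1 (mem_Sfin.mp x.2).2.1)
      (hPdvd _ _ (mem_Sfin.mp y.2).1 (mem_Sfin.mp y.2).2.1) h2
    have h4 := pair_inj hp₁ hp₂ hne h3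
    exact Subtype.ext (Prod.ext_iff.mpr h4)
  have hsurj : Function.Surjective f := by
    rintro ⟨I, hIb, hIt⟩
    obtain ⟨d, hd, hI⟩ := zmod_principal I
    obtain ⟨a, b, ha, hb, rfl⟩ := dvd_decomp hp₁ hp₂ (hn ▸ hd)
    have hmem : (a, b) ∈ S := by
      rw [hS, mem_Sfin]
      refine ⟨ha, hb, ?_, ?_⟩
      · intro h
        rw [Prod.ext_iff] at h
        apply hIt
        rw [hI, span_eq_top_iff hd, hP1]
        exact ⟨h.1, h.2⟩
      · intro h
        rw [Prod.ext_iff] at h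
        apply hIb
        rw [hI, span_eq_bot_iff hd, hPn]
        exact ⟨h.1, h.2⟩
    exact ⟨⟨(a, b), hmem⟩, Subtype.ext hI.symm⟩
  have hbij : Function.Bijective f := ⟨hinj, hsurj⟩
  haveI : Fintype {I : Ideal (ZMod n) // I ≠ ⊥ ∧ I ≠ ⊤} := Fintype.ofBijective f hbij
  -- adjacency characterization
  have hadj : ∀ x y : S, (essentialIdealGraph (ZMod n)).Adj (f x) (f y) ↔
      (y.1 ≠ x.1 ∧ ¬(x.1.1 = m₁ ∧ y.1.1 = m₁) ∧ ¬(x.1.2 = m₂ ∧ y.1.2 = m₂)) := by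
    intro x y
    obtain ⟨hx1, hx2, hx3, hx4⟩ := mem_Sfin.mp x.2
    obtain ⟨hy1, hy2, hy3, hy4⟩ := mem_Sfin.mp y.2
    have hdx : p₁ ^ x.1.1 * p₂ ^ x.1.2 ∣ n := hPdvd _ _ hx1 hx2
    have hdy : p₁ ^ y.1.1 * p₂ ^ y.1.2 ∣ n := hPdvd _ _ hy1 hy2
    have hg : Nat.gcd (p₁ ^ x.1.1 * p₂ ^ x.1.2) (p₁ ^ y.1.1 * p₂ ^ y.1.2) ∣ n :=
      (Nat.gcd_dvd_left _ _).trans hdx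
    have hgn : Nat.gcd (p₁ ^ x.1.1 * p₂ ^ x.1.2) (p₁ ^ y.1.1 * p₂ ^ y.1.2) ≠ n := by
      intro h
      have h2 : n ∣ p₁ ^ x.1.1 * p₂ ^ x.1.2 := h ▸ Nat.gcd_dvd_left _ _
      have h3 := Nat.dvd_antisymm hdx h2
      rw [hPn] at h3
      exact hx4 (Prod.ext_iff.mpr h3)
    have hAdj : (essentialIdealGraph (ZMod n)).Adj (f x) (f y) ↔
        (f x ≠ f y ∧ IsEssentialIdeal ((f x).1 ⊔ (f y).1)) := Iff.rfl
    rw [hAdj, hfval, hfval, span_sup, essential_iff hp₁ hp₂ hne hm₁ hm₂ hn hg hgn]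
    have hne1 : (f x ≠ f y) ↔ y.1 ≠ x.1 := by
      rw [hinj.ne_iff]
      rw [Ne, Ne, Subtype.ext_iff, eq_comm]
    rw [hne1]
    have hgcd1 : p₁ ^ m₁ ∣ Nat.gcd (p₁ ^ x.1.1 * p₂ ^ x.1.2) (p₁ ^ y.1.1 * p₂ ^ y.1.2) ↔
        (x.1.1 = m₁ ∧ y.1.1 = m₁) := by
      rw [Nat.dvd_gcd_iff, pow_dvd_pair_iff₁ hp₁ hp₂ hne, pow_dvd_pair_iff₁ hp₁ hp₂ hne]
      omega
    have hgcd2 : p₂ ^ m₂ ∣ Nat.gcd (p₁ ^ x.1.1 * p₂ ^ x.1.2) (p₁ ^ y.1.1 * p₂ ^ y.1.2) ↔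
        (x.1.2 = m₂ ∧ y.1.2 = m₂) := by
      rw [Nat.dvd_gcd_iff, pow_dvd_pair_iff₂ hp₁ hp₂ hne, pow_dvd_pair_iff₂ hp₁ hp₂ hne]
      omega
    rw [hgcd1, hgcd2]
  -- degree computation
  have hdeg : ∀ x : S, gdeg (essentialIdealGraph (ZMod n)) (f x) =
      (S.filter (fun y => y ≠ x.1 ∧ ¬(x.1.1 = m₁ ∧ y.1 = m₁) ∧ ¬(x.1.2 = m₂ ∧ y.2 = m₂))).card := by
    intro x
    rw [gdeg]
    have e1 : {y : S // (y.1 ≠ x.1 ∧ ¬(x.1.1 = m₁ ∧ y.1.1 = m₁) ∧ ¬(x.1.2 = m₂ ∧ y.1.2 = m₂))} ≃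
        {u // (essentialIdealGraph (ZMod n)).Adj (f x) u} :=
      Equiv.subtypeEquiv (Equiv.ofBijective f hbij) (fun y => ((hadj x y).symm))
    rw [Nat.card_congr e1.symm]
    have e2 : {y : S // (y.1 ≠ x.1 ∧ ¬(x.1.1 = m₁ ∧ y.1.1 = m₁) ∧ ¬(x.1.2 = m₂ ∧ y.1.2 = m₂))} ≃
        {z : ℕ × ℕ // z ∈ S.filter (fun y => y ≠ x.1 ∧ ¬(x.1.1 = m₁ ∧ y.1 = m₁) ∧ ¬(x.1.2 = m₂ ∧ y.2 = m₂))} :=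
      (Equiv.subtypeSubtypeEquivSubtypeInter (fun z : ℕ × ℕ => z ∈ S)
          (fun z => z ≠ x.1 ∧ ¬(x.1.1 = m₁ ∧ z.1 = m₁) ∧ ¬(x.1.2 = m₂ ∧ z.2 = m₂))).trans
        (Equiv.subtypeEquivRight (fun z => by simp [Finset.mem_filter]))
    rw [Nat.card_congr e2, Nat.card_eq_finsetCard]
  -- value lemmas
  have hScard : S.card = (m₁+1)*(m₂+1) - 2 := Sfin_card hm₁ hm₂
  have hcard1 : (S.filter (fun y => y.1 = m₁)).card = m₂ := by
    rw [hS, Sfin_filter1 hm₁]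
    simp
  have hcard2 : (S.filter (fun y => y.2 = m₂)).card = m₁ := by
    rw [hS, Sfin_filter2 hm₂]
    simp
  have hval1 : ∀ z ∈ S, z.1 = m₁ →
      (S.filter (fun y => y ≠ z ∧ ¬(z.1 = m₁ ∧ y.1 = m₁) ∧ ¬(z.2 = m₂ ∧ y.2 = m₂))).card
        = m + m₁ := by
    intro z hz hz1
    have hz' := mem_Sfin.mp hz
    have hz2 : z.2 ≠ m₂ := by
      intro h
      exact hz'.2.2.2 (Prod.ext_iff.mpr ⟨hz1, h⟩)
    have heq : S.filter (fun y => y ≠ z ∧ ¬(z.1 = m₁ ∧ y.1 = m₁) ∧ ¬(z.2 = m₂ ∧ y.2 = m₂))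
        = S.filter (fun y => ¬ y.1 = m₁) := by
      apply Finset.filter_congr
      intro y hy
      constructor
      · rintro ⟨h1, h2, h3⟩
        exact fun hy1 => h2 ⟨hz1, hy1⟩
      · intro hy1
        exact ⟨fun h => hy1 (by rw [h, hz1]), fun h => hy1 h.2, fun h => hz2 h.1⟩
    rw [heq]
    have hsplit := Finset.card_filter_add_card_filter_not
      (s := S) (p := fun y => y.1 = m₁)
    omega
  have hval2 : ∀ z ∈ S, z.2 = m₂ →
      (S.filter (fun y => y ≠ z ∧ ¬(z.1 = m₁ ∧ y.1 = m₁) ∧ ¬(z.2 = m₂ ∧ y.2 = m₂))).card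
        = m + m₂ := by
    intro z hz hz2
    have hz' := mem_Sfin.mp hz
    have hz1 : z.1 ≠ m₁ := by
      intro h
      exact hz'.2.2.2 (Prod.ext_iff.mpr ⟨h, hz2⟩)
    have heq : S.filter (fun y => y ≠ z ∧ ¬(z.1 = m₁ ∧ y.1 = m₁) ∧ ¬(z.2 = m₂ ∧ y.2 = m₂))
        = S.filter (fun y => ¬ y.2 = m₂) := by
      apply Finset.filter_congr
      intro y hy
      constructor
      · rintro ⟨h1, h2, h3⟩
        exact fun hy2 => h3 ⟨hz2, hy2⟩
      · intro hy2
        exact ⟨fun h => hy2 (by rw [h, hz2]), fun h => hz1 h.1, fun h => hy2 h.2⟩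
    rw [heq]
    have hsplit := Finset.card_filter_add_card_filter_not
      (s := S) (p := fun y => y.2 = m₂)
    omega
  have hval3 : ∀ z ∈ S, z.1 ≠ m₁ → z.2 ≠ m₂ →
      (S.filter (fun y => y ≠ z ∧ ¬(z.1 = m₁ ∧ y.1 = m₁) ∧ ¬(z.2 = m₂ ∧ y.2 = m₂))).card
        = T - 1 := by
    intro z hz hz1 hz2
    have heq : S.filter (fun y => y ≠ z ∧ ¬(z.1 = m₁ ∧ y.1 = m₁) ∧ ¬(z.2 = m₂ ∧ y.2 = m₂))
        = S.filter (fun y => y ≠ z) := by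
      apply Finset.filter_congr
      intro y hy
      constructor
      · rintro ⟨h1, h2, h3⟩
        exact h1
      · intro h1
        exact ⟨h1, fun h => hz1 h.1, fun h => hz2 h.1⟩
    rw [heq, Finset.filter_ne', Finset.card_erase_of_mem hz]
    omega
  -- assemble the sum
  rw [zagreb1, finsum_eq_sum_of_fintype]
  rw [← Fintype.sum_bijective f hbij _ _ (fun x => rfl)]
  rw [show (∑ x : {x // x ∈ S}, gdeg (essentialIdealGraph (ZMod n)) (f x) ^ 2)
      = ∑ z ∈ S, (Finset.filter (fun y => y ≠ z ∧ ¬(z.1 = m₁ ∧ y.1 = m₁) ∧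
        ¬(z.2 = m₂ ∧ y.2 = m₂)) S).card ^ 2 from by
    rw [← Finset.sum_coe_sort S (fun z => (Finset.filter (fun y => y ≠ z ∧
      ¬(z.1 = m₁ ∧ y.1 = m₁) ∧ ¬(z.2 = m₂ ∧ y.2 = m₂)) S).card ^ 2)]
    exact Finset.sum_congr rfl (fun x _ => by rw [hdeg x])]
  rw [← Finset.sum_filter_add_sum_filter_not S (fun y => y.1 = m₁)]
  rw [← Finset.sum_filter_add_sum_filter_not (S.filter (fun y => ¬ y.1 = m₁))
    (fun y => y.2 = m₂)]
  have hs1 : ∑ z ∈ S.filter (fun y => y.1 = m₁),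
      ((S.filter (fun y => y ≠ z ∧ ¬(z.1 = m₁ ∧ y.1 = m₁) ∧ ¬(z.2 = m₂ ∧ y.2 = m₂))).card) ^ 2
      = m₂ * (m + m₁) ^ 2 := by
    rw [Finset.sum_congr rfl (fun z hz => by
      rw [hval1 z (Finset.mem_filter.mp hz).1 (Finset.mem_filter.mp hz).2])]
    rw [Finset.sum_const, hcard1, smul_eq_mul]
  have hAeq : (S.filter (fun y => ¬ y.1 = m₁)).filter (fun y => y.2 = m₂)
      = S.filter (fun y => y.2 = m₂) := by
    rw [Finset.filter_filter]
    apply Finset.filter_congr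
    intro y hy
    constructor
    · exact fun h => h.2
    · intro h
      refine ⟨?_, h⟩
      intro h1
      exact (mem_Sfin.mp hy).2.2.2 (Prod.ext_iff.mpr ⟨h1, h⟩)
  have hs2 : ∑ z ∈ (S.filter (fun y => ¬ y.1 = m₁)).filter (fun y => y.2 = m₂),
      ((S.filter (fun y => y ≠ z ∧ ¬(z.1 = m₁ ∧ y.1 = m₁) ∧ ¬(z.2 = m₂ ∧ y.2 = m₂))).card) ^ 2
      = m₁ * (m + m₂) ^ 2 := by
    rw [hAeq]
    rw [Finset.sum_congr rfl (fun z hz => by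
      rw [hval2 z (Finset.mem_filter.mp hz).1 (Finset.mem_filter.mp hz).2])]
    rw [Finset.sum_const, hcard2, smul_eq_mul]
  have hBeq : (S.filter (fun y => ¬ y.1 = m₁)).filter (fun y => ¬ y.2 = m₂)
      = (Finset.range m₁ ×ˢ Finset.range m₂).erase (0,0) := by
    rw [Finset.filter_filter, hS, Sfin_filter3 hm₁ hm₂]
  have hBcard : ((S.filter (fun y => ¬ y.1 = m₁)).filter (fun y => ¬ y.2 = m₂)).card = m := by
    rw [hBeq, Finset.card_erase_of_mem (by simp [Finset.mem_product]; omega)]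
    simp [Finset.card_product]
    omega
  have hs3 : ∑ z ∈ (S.filter (fun y => ¬ y.1 = m₁)).filter (fun y => ¬ y.2 = m₂),
      ((S.filter (fun y => y ≠ z ∧ ¬(z.1 = m₁ ∧ y.1 = m₁) ∧ ¬(z.2 = m₂ ∧ y.2 = m₂))).card) ^ 2
      = m * (T - 1) ^ 2 := by
    rw [Finset.sum_congr rfl (fun z hz => by
      have h1 := Finset.mem_filter.mp hz
      have h2 := Finset.mem_filter.mp h1.1
      rw [hval3 z h2.1 h2.2 h1.2])]
    rw [Finset.sum_const, hBcard, smul_eq_mul]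
  rw [hs1, hs2, hs3]
  ring
end
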